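/- (Proposition 'Weighted Majority: Exponential Bound'.) For every f > 0 there exists a constant c > 0, depending only on Q and f, such that for every integer h ≥ 1, every edge-weight assignment with τ_v ≥ f for all nonempty v, every unit flow Ψ, every i ∈ Φ, and every ζ ∈ ℝ: (1/π_i) · ∑_{x : V → Φ, x_ρ = i} P(x) exp(ζ S(x)) ≤ exp( ν_i ζ + (1/2) c ζ² K_Ψ ); that is, ln E[exp(ζ S) | ξ_ρ = i] ≤ ν_i ζ + (1/2) c ζ² K_Ψ. -/

import Mathlib

open scoped BigOperators

/-- The matrix exponential of a real `Φ × Φ` matrix. -/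
noncomputable def matExp {Φ : Type*} [Fintype Φ] [DecidableEq Φ] (A : Matrix Φ Φ ℝ) :
    Matrix Φ Φ ℝ := NormedSpace.exp A

/-- Sum of edge weights along the ancestor path of `v` (heap indexing of the binary
tree: vertices are positive integers, the root is `1`, and the parent of `v ≥ 2` is
`v / 2`), stopping at (and excluding) the ancestor `a`.  This is `τ(a, v)`. -/
noncomputable def pathSum (τ : ℕ → ℝ) (a : ℕ) (v : ℕ) : ℝ :=
  if _h : v ≤ a then 0 else τ v + pathSum τ a (v / 2)
termination_by v
decreasing_by omega

/-- Lowest common ancestor (longest common prefix) of two same-level vertices in heap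
indexing. -/
def lca (a b : ℕ) : ℕ :=
  if a = b then a else lca (a / 2) (b / 2)
termination_by a + b
decreasing_by omega

/-- Tree distance `τ(a,b) = τ(c,a) + τ(c,b)` where `c` is the longest common prefix of
the same-level vertices `a` and `b`. -/
noncomputable def treeDist (τ : ℕ → ℝ) (a b : ℕ) : ℝ :=
  pathSum τ (lca a b) a + pathSum τ (lca a b) b

/-- Interpret a heap-index vertex `v ∈ {1, …, 2^{h+1} − 1}` of the complete binary tree
of depth `h` as an index into configurations (binary strings of length `m ≤ h`
correspond to the integers in `[2^m, 2^{m+1})`). -/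
def idx (h v : ℕ) : Fin (2 ^ (h + 1) - 1) :=
  ⟨(v - 1) % (2 ^ (h + 1) - 1), Nat.mod_lt _ (by
    have : 2 ^ 1 ≤ 2 ^ (h + 1) := Nat.pow_le_pow_right (by norm_num) (by omega)
    omega)⟩

/-- The GTR law on the complete binary tree of depth `h`: the probability
`P(x) = π(x_ρ) ∏_{v nonempty} (exp(τ_v Q))_{x_{parent(v)}, x_v}` of a configuration
`x` (configurations assign a state to each of the `2^{h+1} − 1` vertices). -/
noncomputable def gtrP {Φ : Type*} [Fintype Φ] [DecidableEq Φ]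
    (h : ℕ) (π : Φ → ℝ) (Q : Matrix Φ Φ ℝ) (τ : ℕ → ℝ)
    (x : Fin (2 ^ (h + 1) - 1) → Φ) : ℝ :=
  π (x (idx h 1)) *
    ∏ v ∈ Finset.Ico 2 (2 ^ (h + 1)),
      (matExp (τ v • Q)) (x (idx h (v / 2))) (x (idx h v))

/-- The estimator `S(x) = ∑_{ℓ leaf} Ψ(ℓ) ν_{x_ℓ} / Θ_{ρ,ℓ}` with `Θ_{ρ,ℓ} = e^{−τ(ρ,ℓ)}`. -/
noncomputable def estS {Φ : Type*} [Fintype Φ] [DecidableEq Φ]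
    (h : ℕ) (ν : Φ → ℝ) (τ Ψ : ℕ → ℝ) (x : Fin (2 ^ (h + 1) - 1) → Φ) : ℝ :=
  ∑ ℓ ∈ Finset.Ico (2 ^ h) (2 ^ (h + 1)),
    Ψ ℓ * ν (x (idx h ℓ)) * Real.exp (pathSum τ 1 ℓ)

/-- `K_Ψ = ∑_{v nonempty} (1 − e^{−2τ_v}) e^{2τ(ρ,v)} Ψ(v)²`. -/
noncomputable def Kflow (h : ℕ) (τ Ψ : ℕ → ℝ) : ℝ :=
  ∑ v ∈ Finset.Ico 2 (2 ^ (h + 1)),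
    (1 - Real.exp (-(2 * τ v))) * Real.exp (2 * pathSum τ 1 v) * Ψ v ^ 2

/-- `Ψ` is a unit flow from the root to the leaves of the depth-`h` tree: nonnegative,
`Ψ(ρ) = 1`, and `Ψ(v) = Ψ(v0) + Ψ(v1)` for internal vertices. -/
def IsUnitFlow (h : ℕ) (Ψ : ℕ → ℝ) : Prop :=
  Ψ 1 = 1 ∧ (∀ v, 1 ≤ v → v < 2 ^ (h + 1) → 0 ≤ Ψ v) ∧
    ∀ v, 1 ≤ v → v < 2 ^ h → Ψ v = Ψ (2 * v) + Ψ (2 * v + 1)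

set_option linter.unusedSectionVars false
set_option maxHeartbeats 1000000



section MatExp

variable {Φ : Type*} [Fintype Φ] [DecidableEq Φ]

lemma matExp_mulVec_eig (A : Matrix Φ Φ ℝ) (w : Φ → ℝ) (c : ℝ)
    (hw : A.mulVec w = c • w) : (matExp A).mulVec w = Real.exp c • w := by
  letI : SeminormedRing (Matrix Φ Φ ℝ) := Matrix.linftyOpSemiNormedRing
  letI : NormedRing (Matrix Φ Φ ℝ) := Matrix.linftyOpNormedRing
  letI : NormedAlgebra ℝ (Matrix Φ Φ ℝ) := Matrix.linftyOpNormedAlgebra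
  have hpow : ∀ n : ℕ, (A ^ n).mulVec w = (c ^ n) • w := by
    intro n
    induction n with
    | zero => simp [Matrix.one_mulVec]
    | succ n ih =>
      rw [pow_succ', ← Matrix.mulVec_mulVec, ih, Matrix.mulVec_smul, hw, smul_smul,
        ← pow_succ]
  have hs : HasSum (fun n : ℕ => (((Nat.factorial n : ℝ)))⁻¹ • A ^ n) (matExp A) :=
    NormedSpace.exp_series_hasSum_exp' A
  let L : Matrix Φ Φ ℝ →ₗ[ℝ] (Φ → ℝ) :=
    { toFun := fun B => B.mulVec w
      map_add' := fun B C => Matrix.add_mulVec B C w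
      map_smul' := fun r B => by simp [Matrix.smul_mulVec] }
  have hs2 := hs.mapL (LinearMap.toContinuousLinearMap L)
  have heval : ∀ B : Matrix Φ Φ ℝ, (LinearMap.toContinuousLinearMap L) B = B.mulVec w :=
    fun B => rfl
  simp only [heval] at hs2
  have hs3 : HasSum (fun n : ℕ => ((((Nat.factorial n : ℝ)))⁻¹ * c ^ n) • w) ((matExp A).mulVec w) := by
    have hfun : (fun n : ℕ => ((((Nat.factorial n : ℝ)))⁻¹ * c ^ n) • w)
        = fun n : ℕ => ((((Nat.factorial n : ℝ)))⁻¹ • A ^ n).mulVec w := by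
      funext n
      rw [Matrix.smul_mulVec, hpow, smul_smul]
    rw [hfun]
    exact hs2
  have hreal : HasSum (fun n : ℕ => ((((Nat.factorial n : ℝ)))⁻¹ * c ^ n) • w) (Real.exp c • w) := by
    have h0 : HasSum (fun n : ℕ => (((Nat.factorial n : ℝ)))⁻¹ • c ^ n) (NormedSpace.exp c) :=
      NormedSpace.exp_series_hasSum_exp' c
    have := h0.smul_const w
    simpa [Real.exp_eq_exp_ℝ, smul_eq_mul] using this
  exact hs3.unique hreal

lemma matExp_entry_nonneg (A : Matrix Φ Φ ℝ) (hA : ∀ i j, i ≠ j → 0 ≤ A i j) (i j : Φ) :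
    0 ≤ matExp A i j := by
  classical
  letI : SeminormedRing (Matrix Φ Φ ℝ) := Matrix.linftyOpSemiNormedRing
  letI : NormedRing (Matrix Φ Φ ℝ) := Matrix.linftyOpNormedRing
  letI : NormedAlgebra ℝ (Matrix Φ Φ ℝ) := Matrix.linftyOpNormedAlgebra
  set q : ℝ := ∑ k : Φ, |A k k| with hqdef
  have hq : ∀ k, -A k k ≤ q := by
    intro k
    refine (neg_le_abs _).trans ?_
    exact Finset.single_le_sum (f := fun k => |A k k|) (fun _ _ => abs_nonneg _)
      (Finset.mem_univ k)
  set B := A + q • (1 : Matrix Φ Φ ℝ) with hBdef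
  have hB : ∀ a b, 0 ≤ B a b := by
    intro a b
    by_cases hab : a = b
    · subst hab
      simp only [hBdef, Matrix.add_apply, Matrix.smul_apply, Matrix.one_apply_eq,
        smul_eq_mul, mul_one]
      linarith [hq a]
    · simp only [hBdef, Matrix.add_apply, Matrix.smul_apply, Matrix.one_apply_ne hab,
        smul_eq_mul, mul_zero, add_zero]
      exact hA a b hab
  have hBpow : ∀ n a b, 0 ≤ (B ^ n) a b := by
    intro n
    induction n with
    | zero =>
      intro a b
      by_cases hab : a = b <;> simp [pow_zero, Matrix.one_apply, hab]
    | succ n ih =>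
      intro a b
      rw [pow_succ, Matrix.mul_apply]
      exact Finset.sum_nonneg fun k _ => mul_nonneg (ih a k) (hB k b)
  have hcomm : Commute ((-q) • (1 : Matrix Φ Φ ℝ)) B := (Commute.one_left B).smul_left (-q)
  have hAB : A = (-q) • (1 : Matrix Φ Φ ℝ) + B := by
    rw [hBdef, neg_smul]
    abel
  have h1 : NormedSpace.exp ((-q) • (1 : Matrix Φ Φ ℝ)) = Real.exp (-q) • 1 := by
    rw [← Algebra.algebraMap_eq_smul_one]
    erw [← NormedSpace.algebraMap_exp_comm]
    rw [Algebra.algebraMap_eq_smul_one, Real.exp_eq_exp_ℝ]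
  have hsplit : matExp A = Real.exp (-q) • matExp B := by
    rw [show matExp A = NormedSpace.exp A from rfl, hAB,
      Matrix.exp_add_of_commute _ _ hcomm, h1, smul_mul_assoc, one_mul]
    rfl
  have hsB : HasSum (fun n : ℕ => (((Nat.factorial n : ℝ)))⁻¹ • B ^ n) (matExp B) :=
    NormedSpace.exp_series_hasSum_exp' B
  let L : Matrix Φ Φ ℝ →ₗ[ℝ] ℝ :=
    { toFun := fun M => M i j
      map_add' := fun M N => rfl
      map_smul' := fun r M => rfl }
  have h2 := hsB.mapL (LinearMap.toContinuousLinearMap L)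
  have heval : ∀ M : Matrix Φ Φ ℝ, (LinearMap.toContinuousLinearMap L) M = M i j :=
    fun M => rfl
  simp only [heval] at h2
  have hBnn : 0 ≤ matExp B i j := by
    refine hasSum_le (fun n => ?_) hasSum_zero h2
    have : ((((Nat.factorial n : ℝ)))⁻¹ • B ^ n) i j = (((Nat.factorial n : ℝ)))⁻¹ * (B ^ n) i j := rfl
    rw [this]
    exact mul_nonneg (by positivity) (hBpow n i j)
  rw [hsplit]
  have : (Real.exp (-q) • matExp B) i j = Real.exp (-q) * matExp B i j := rfl
  rw [this]
  positivity

end MatExp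

section Stoch

variable {Φ : Type*} [Fintype Φ] [DecidableEq Φ]

lemma matExp_row_sum (Q : Matrix Φ Φ ℝ) (hQrow : ∀ i, ∑ j : Φ, Q i j = 0) (t : ℝ) (j : Φ) :
    ∑ a : Φ, matExp (t • Q) j a = 1 := by
  have h1 : (t • Q).mulVec (fun _ => (1 : ℝ)) = (0 : ℝ) • (fun _ => (1 : ℝ)) := by
    funext k
    simp only [Matrix.mulVec, dotProduct, Matrix.smul_apply, smul_eq_mul, mul_one,
      zero_smul, Pi.zero_apply, ← Finset.mul_sum, hQrow, mul_zero]
  have h2 := congrFun (matExp_mulVec_eig (t • Q) _ 0 h1) j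
  simp only [Matrix.mulVec, dotProduct, mul_one, Real.exp_zero, one_smul] at h2
  exact h2

lemma matExp_mean (Q : Matrix Φ Φ ℝ) (ν : Φ → ℝ) (hν : Q.mulVec ν = -ν) (t : ℝ) (j : Φ) :
    ∑ a : Φ, matExp (t • Q) j a * ν a = Real.exp (-t) * ν j := by
  have h1 : (t • Q).mulVec ν = (-t) • ν := by
    rw [Matrix.smul_mulVec, hν]
    funext k
    simp only [Pi.smul_apply, Pi.neg_apply, smul_eq_mul, neg_smul, Pi.neg_apply]
    ring
  have h2 := congrFun (matExp_mulVec_eig (t • Q) ν (-t) h1) j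
  simpa only [Matrix.mulVec, dotProduct, Pi.smul_apply, smul_eq_mul] using h2

lemma matExp_rate_nonneg (Q : Matrix Φ Φ ℝ) (hQoff : ∀ i j, i ≠ j → 0 ≤ Q i j)
    (t : ℝ) (ht : 0 ≤ t) (a b : Φ) : 0 ≤ matExp (t • Q) a b := by
  refine matExp_entry_nonneg _ (fun i j hij => ?_) a b
  have : (t • Q) i j = t * Q i j := rfl
  rw [this]
  exact mul_nonneg ht (hQoff i j hij)

lemma hoeffding_step (Q : Matrix Φ Φ ℝ) (hQoff : ∀ i j, i ≠ j → 0 ≤ Q i j)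
    (hQrow : ∀ i, ∑ j : Φ, Q i j = 0) (ν : Φ → ℝ) (hν : Q.mulVec ν = -ν)
    (C : ℝ) (hCpos : 0 < C) (hC : ∀ a, |ν a| ≤ C)
    (t : ℝ) (ht : 0 ≤ t) (θ : ℝ) (j : Φ) :
    ∑ a : Φ, matExp (t • Q) j a * Real.exp (θ * ν a)
      ≤ Real.exp (θ * (Real.exp (-t) * ν j) + 2 * C ^ 2 * θ ^ 2) := by
  set p : Φ → ℝ := fun a => matExp (t • Q) j a with hpdef
  set μ : ℝ := Real.exp (-t) * ν j with hmudef
  have hμ : |μ| ≤ C := by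
    rw [hmudef, abs_mul, Real.abs_exp]
    calc Real.exp (-t) * |ν j| ≤ 1 * C :=
      mul_le_mul (Real.exp_le_one_iff.2 (by linarith)) (hC j) (abs_nonneg _) one_pos.le
    _ = C := one_mul C
  have hp : ∀ a, 0 ≤ p a := fun a => matExp_rate_nonneg Q hQoff t ht j a
  have hsum1 : ∑ a, p a = 1 := matExp_row_sum Q hQrow t j
  have hmean : ∑ a, p a * ν a = μ := matExp_mean Q ν hν t j
  set E1 : ℝ := Real.exp (θ * μ - 2 * (θ * C)) with hE1def
  set E2 : ℝ := Real.exp (θ * μ + 2 * (θ * C)) with hE2def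
  have chord : ∀ a : Φ,
      Real.exp (θ * ν a) ≤ (2 * C - (ν a - μ)) / (4 * C) * E1
        + (2 * C + (ν a - μ)) / (4 * C) * E2 := by
    intro a
    have hca := abs_le.1 (hC a)
    have hcm := abs_le.1 hμ
    have hd1 : 0 ≤ (2 * C - (ν a - μ)) / (4 * C) := by
      apply div_nonneg <;> linarith
    have hd2 : 0 ≤ (2 * C + (ν a - μ)) / (4 * C) := by
      apply div_nonneg <;> linarith
    have hdsum : (2 * C - (ν a - μ)) / (4 * C) + (2 * C + (ν a - μ)) / (4 * C) = 1 := by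
      field_simp
      ring
    have hconv := convexOn_exp.2 (Set.mem_univ (θ * μ - 2 * (θ * C)))
      (Set.mem_univ (θ * μ + 2 * (θ * C))) hd1 hd2 hdsum
    simp only [smul_eq_mul] at hconv
    have hxeq : (2 * C - (ν a - μ)) / (4 * C) * (θ * μ - 2 * (θ * C))
        + (2 * C + (ν a - μ)) / (4 * C) * (θ * μ + 2 * (θ * C)) = θ * ν a := by
      field_simp
      ring
    rw [hxeq] at hconv
    exact hconv
  calc ∑ a, p a * Real.exp (θ * ν a)
      ≤ ∑ a, p a * ((2 * C - (ν a - μ)) / (4 * C) * E1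
          + (2 * C + (ν a - μ)) / (4 * C) * E2) :=
        Finset.sum_le_sum fun a _ => mul_le_mul_of_nonneg_left (chord a) (hp a)
    _ = (∑ a, p a * (2 * C - (ν a - μ))) / (4 * C) * E1
          + (∑ a, p a * (2 * C + (ν a - μ))) / (4 * C) * E2 := by
        rw [Finset.sum_congr rfl (fun a _ => show
          p a * ((2 * C - (ν a - μ)) / (4 * C) * E1 + (2 * C + (ν a - μ)) / (4 * C) * E2)
          = p a * (2 * C - (ν a - μ)) / (4 * C) * E1
            + p a * (2 * C + (ν a - μ)) / (4 * C) * E2 from by ring),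
          Finset.sum_add_distrib]
        congr 1 <;> rw [← Finset.sum_mul, ← Finset.sum_div]
    _ = (E1 + E2) / 2 := by
        have hA : ∑ a, p a * (2 * C - (ν a - μ)) = 2 * C := by
          rw [Finset.sum_congr rfl (fun a _ => show
            p a * (2 * C - (ν a - μ)) = (2 * C + μ) * p a - p a * ν a from by ring),
            Finset.sum_sub_distrib, ← Finset.mul_sum, hsum1, hmean]
          ring
        have hB : ∑ a, p a * (2 * C + (ν a - μ)) = 2 * C := by
          rw [Finset.sum_congr rfl (fun a _ => show
            p a * (2 * C + (ν a - μ)) = (2 * C - μ) * p a + p a * ν a from by ring),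
            Finset.sum_add_distrib, ← Finset.mul_sum, hsum1, hmean]
          ring
        rw [hA, hB]
        field_simp
        ring
    _ = Real.exp (θ * μ) * Real.cosh (2 * (θ * C)) := by
        rw [Real.cosh_eq, hE1def, hE2def, show θ * μ - 2 * (θ * C) = θ * μ + -(2 * (θ * C))
          from by ring, Real.exp_add, Real.exp_add]
        ring
    _ ≤ Real.exp (θ * μ) * Real.exp ((2 * (θ * C)) ^ 2 / 2) :=
        mul_le_mul_of_nonneg_left (Real.cosh_le_exp_half_sq _) (Real.exp_pos _).le
    _ = Real.exp (θ * μ + 2 * C ^ 2 * θ ^ 2) := by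
        rw [← Real.exp_add]
        congr 1
        ring
end Stoch

section Comb

variable {Φ : Type*} [Fintype Φ] [DecidableEq Φ]

lemma idx_val (h v : ℕ) (h1 : 1 ≤ v) (h2 : v < 2 ^ (h + 1)) :
    ((idx h v : Fin (2 ^ (h + 1) - 1)) : ℕ) = v - 1 := by
  have h3 : (2 : ℕ) ^ (h + 1) = 2 * 2 ^ h := by rw [pow_succ]; ring
  have h4 : (1 : ℕ) ≤ 2 ^ h := Nat.one_le_two_pow
  simp only [idx]
  exact Nat.mod_eq_of_lt (by omega)

lemma pathSum_one (τ : ℕ → ℝ) : pathSum τ 1 1 = 0 := by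
  rw [pathSum]
  simp

lemma pathSum_step (τ : ℕ → ℝ) (v : ℕ) (hv : 2 ≤ v) :
    pathSum τ 1 v = τ v + pathSum τ 1 (v / 2) := by
  rw [pathSum]
  rw [dif_neg (by omega)]

/-- glue a configuration on the depth-`n` tree and leaf states into a depth-`n+1`
configuration. -/
def glueEquiv (n : ℕ) :
    ((Fin (2 ^ (n + 1) - 1) → Φ) × (Fin (2 ^ (n + 1)) → Φ)) ≃ (Fin (2 ^ (n + 1 + 1) - 1) → Φ) where
  toFun p k :=
    if hk : (k : ℕ) < 2 ^ (n + 1) - 1 then p.1 ⟨k, hk⟩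
    else p.2 ⟨(k : ℕ) - (2 ^ (n + 1) - 1), by
      have h3 : (2 : ℕ) ^ (n + 1 + 1) = 2 * 2 ^ (n + 1) := by rw [pow_succ]; ring
      have h4 : (1 : ℕ) ≤ 2 ^ (n + 1) := Nat.one_le_two_pow
      have := k.isLt
      omega⟩
  invFun x :=
    (fun j => x ⟨(j : ℕ), by
      have h3 : (2 : ℕ) ^ (n + 1 + 1) = 2 * 2 ^ (n + 1) := by rw [pow_succ]; ring
      have h4 : (1 : ℕ) ≤ 2 ^ (n + 1) := Nat.one_le_two_pow
      have := j.isLt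
      omega⟩,
     fun j => x ⟨2 ^ (n + 1) - 1 + (j : ℕ), by
      have h3 : (2 : ℕ) ^ (n + 1 + 1) = 2 * 2 ^ (n + 1) := by rw [pow_succ]; ring
      have h4 : (1 : ℕ) ≤ 2 ^ (n + 1) := Nat.one_le_two_pow
      have := j.isLt
      omega⟩)
  left_inv p := by
    have h4 : (1 : ℕ) ≤ 2 ^ (n + 1) := Nat.one_le_two_pow
    ext j
    · exact dif_pos j.isLt
    · have hj : ¬ ((2 ^ (n + 1) - 1 + (j : ℕ)) < 2 ^ (n + 1) - 1) := by omega
      dsimp only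
      rw [dif_neg hj]
      exact congrArg p.2 (Fin.ext (by simp only [Fin.val_mk]; omega))
  right_inv x := by
    have h4 : (1 : ℕ) ≤ 2 ^ (n + 1) := Nat.one_le_two_pow
    funext k
    by_cases hk : (k : ℕ) < 2 ^ (n + 1) - 1
    · exact dif_pos hk
    · dsimp only
      rw [dif_neg hk]
      exact congrArg x (Fin.ext (by simp only [Fin.val_mk]; omega))

lemma glue_low (n v : ℕ) (h1 : 1 ≤ v) (h2 : v < 2 ^ (n + 1))
    (y : Fin (2 ^ (n + 1) - 1) → Φ) (z : Fin (2 ^ (n + 1)) → Φ) :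
    glueEquiv n (y, z) (idx (n + 1) v) = y (idx n v) := by
  have h3 : (2 : ℕ) ^ (n + 1 + 1) = 2 * 2 ^ (n + 1) := by rw [pow_succ]; ring
  have h4 : (1 : ℕ) ≤ 2 ^ (n + 1) := Nat.one_le_two_pow
  have hv1 : ((idx (n + 1) v : Fin (2 ^ (n + 1 + 1) - 1)) : ℕ) = v - 1 :=
    idx_val (n + 1) v h1 (by omega)
  have hlt : ((idx (n + 1) v : Fin (2 ^ (n + 1 + 1) - 1)) : ℕ) < 2 ^ (n + 1) - 1 := by omega
  show dite _ _ _ = _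
  rw [dif_pos hlt]
  refine congrArg y (Fin.ext ?_)
  show ((idx (n + 1) v : Fin (2 ^ (n + 1 + 1) - 1)) : ℕ) = ((idx n v : Fin (2 ^ (n + 1) - 1)) : ℕ)
  rw [hv1, idx_val n v h1 h2]

lemma glue_high (n ℓ : ℕ) (h1 : 2 ^ (n + 1) ≤ ℓ) (h2 : ℓ < 2 ^ (n + 1 + 1))
    (y : Fin (2 ^ (n + 1) - 1) → Φ) (z : Fin (2 ^ (n + 1)) → Φ) :
    glueEquiv n (y, z) (idx (n + 1) ℓ) =
      z ⟨(ℓ - 2 ^ (n + 1)) % 2 ^ (n + 1), Nat.mod_lt _ (by positivity)⟩ := by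
  have h3 : (2 : ℕ) ^ (n + 1 + 1) = 2 * 2 ^ (n + 1) := by rw [pow_succ]; ring
  have h4 : (1 : ℕ) ≤ 2 ^ (n + 1) := Nat.one_le_two_pow
  have hv1 : ((idx (n + 1) ℓ : Fin (2 ^ (n + 1 + 1) - 1)) : ℕ) = ℓ - 1 :=
    idx_val (n + 1) ℓ (by omega) h2
  have hlt : ¬ (((idx (n + 1) ℓ : Fin (2 ^ (n + 1 + 1) - 1)) : ℕ) < 2 ^ (n + 1) - 1) := by omega
  show dite _ _ _ = _
  rw [dif_neg hlt]
  refine congrArg z (Fin.ext ?_)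
  show ((idx (n + 1) ℓ : Fin (2 ^ (n + 1 + 1) - 1)) : ℕ) - (2 ^ (n + 1) - 1)
      = (ℓ - 2 ^ (n + 1)) % 2 ^ (n + 1)
  rw [hv1, Nat.mod_eq_of_lt (by omega)]
  omega

lemma sum_Ico_double (g : ℕ → ℝ) (a b : ℕ) :
    ∑ v ∈ Finset.Ico (2 * a) (2 * b), g v = ∑ u ∈ Finset.Ico a b, (g (2 * u) + g (2 * u + 1)) := by
  induction b with
  | zero => simp
  | succ b ih =>
    by_cases hab : b < a
    · rw [Finset.Ico_eq_empty (by omega), Finset.Ico_eq_empty (by omega)]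
      simp
    · push_neg at hab
      rw [show 2 * (b + 1) = (2 * b + 1) + 1 by ring,
        Finset.sum_Ico_succ_top (by omega : 2 * a ≤ 2 * b + 1),
        Finset.sum_Ico_succ_top (by omega : 2 * a ≤ 2 * b),
        Finset.sum_Ico_succ_top (by omega : a ≤ b), ih]
      ring

lemma sum_Ico_offset (g : ℕ → ℝ) (a b : ℕ) :
    ∑ v ∈ Finset.Ico a (a + b), g v = ∑ j : Fin b, g (a + (j : ℕ)) := by
  rw [Finset.sum_Ico_eq_sum_range, Nat.add_sub_cancel_left,
    ← Fin.sum_univ_eq_sum_range (fun i => g (a + i)) b]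

lemma prod_Ico_offset (g : ℕ → ℝ) (a b : ℕ) :
    ∏ v ∈ Finset.Ico a (a + b), g v = ∏ j : Fin b, g (a + (j : ℕ)) := by
  rw [Finset.prod_Ico_eq_prod_range, Nat.add_sub_cancel_left,
    ← Fin.prod_univ_eq_prod_range (fun i => g (a + i)) b]

lemma gtrP_nonneg (n : ℕ) (π : Φ → ℝ) (Q : Matrix Φ Φ ℝ) (τ : ℕ → ℝ)
    (hπpos : ∀ i, 0 < π i) (hQoff : ∀ i j, i ≠ j → 0 ≤ Q i j)
    (hτ : ∀ v, 2 ≤ v → v < 2 ^ (n + 1) → 0 ≤ τ v) (x : Fin (2 ^ (n + 1) - 1) → Φ) :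
    0 ≤ gtrP n π Q τ x := by
  refine mul_nonneg (hπpos _).le (Finset.prod_nonneg fun v hv => ?_)
  rw [Finset.mem_Ico] at hv
  exact matExp_rate_nonneg Q hQoff (τ v) (hτ v hv.1 hv.2) _ _

end Comb

section Comb2

variable {Φ : Type*} [Fintype Φ] [DecidableEq Φ]

lemma glue_high' (n : ℕ) (j : Fin (2 ^ (n + 1)))
    (y : Fin (2 ^ (n + 1) - 1) → Φ) (z : Fin (2 ^ (n + 1)) → Φ) :
    glueEquiv n (y, z) (idx (n + 1) (2 ^ (n + 1) + (j : ℕ))) = z j := by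
  have h3 : (2 : ℕ) ^ (n + 1 + 1) = 2 * 2 ^ (n + 1) := by rw [pow_succ]; ring
  have h4 : (1 : ℕ) ≤ 2 ^ (n + 1) := Nat.one_le_two_pow
  have hj := j.isLt
  have hv1 : ((idx (n + 1) (2 ^ (n + 1) + (j : ℕ)) : Fin (2 ^ (n + 1 + 1) - 1)) : ℕ)
      = 2 ^ (n + 1) + (j : ℕ) - 1 :=
    idx_val (n + 1) _ (by omega) (by omega)
  have hlt : ¬ (((idx (n + 1) (2 ^ (n + 1) + (j : ℕ)) : Fin (2 ^ (n + 1 + 1) - 1)) : ℕ)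
      < 2 ^ (n + 1) - 1) := by omega
  show dite _ _ _ = _
  rw [dif_neg hlt]
  exact congrArg z (Fin.ext (by simp only [Fin.val_mk]; omega))

end Comb2

section Claim

variable {Φ : Type*} [Fintype Φ] [DecidableEq Φ]

lemma claim_bound (Q : Matrix Φ Φ ℝ) (π ν : Φ → ℝ)
    (hQoff : ∀ i j, i ≠ j → 0 ≤ Q i j)
    (hQrow : ∀ i, ∑ j : Φ, Q i j = 0)
    (hπpos : ∀ i, 0 < π i)
    (hν : Q.mulVec ν = -ν)
    (C : ℝ) (hCpos : 0 < C) (hC : ∀ a, |ν a| ≤ C) :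
    ∀ (n : ℕ) (τ Ψ : ℕ → ℝ), (∀ v, 2 ≤ v → v < 2 ^ (n + 1) → 0 ≤ τ v) →
      (∀ v, 1 ≤ v → v < 2 ^ n → Ψ v = Ψ (2 * v) + Ψ (2 * v + 1)) →
      ∀ (i : Φ) (ζ : ℝ),
      (∑ x : Fin (2 ^ (n + 1) - 1) → Φ,
        if x (idx n 1) = i then gtrP n π Q τ x * Real.exp (ζ * estS n ν τ Ψ x) else 0)
      ≤ π i * Real.exp (ζ * (Ψ 1 * ν i)
          + 2 * C ^ 2 * ζ ^ 2 * ∑ v ∈ Finset.Ico 2 (2 ^ (n + 1)),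
              Ψ v ^ 2 * Real.exp (2 * pathSum τ 1 v)) := by
  intro n
  induction n with
  | zero =>
    intro τ Ψ hτ hΨ i ζ
    let e : Φ ≃ (Fin (2 ^ (0 + 1) - 1) → Φ) :=
      { toFun := fun a _ => a
        invFun := fun x => x (idx 0 1)
        left_inv := fun a => rfl
        right_inv := fun x => funext fun k => congrArg x (Fin.ext (by
          have hk := k.isLt
          have h1 : (2 : ℕ) ^ (0 + 1) - 1 = 1 := by norm_num
          have hk' : (k : ℕ) = 0 := by omega
          have hidx : ((idx 0 1 : Fin (2 ^ (0 + 1) - 1)) : ℕ) = 0 := by simp [idx]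
          rw [hidx, hk'])) }
    have hg : ∀ a : Φ, gtrP 0 π Q τ (e a) = π a := by
      intro a
      simp only [gtrP]
      rw [show Finset.Ico 2 (2 ^ (0 + 1)) = ∅ from by decide, Finset.prod_empty, mul_one]
      rfl
    have hs : ∀ a : Φ, estS 0 ν τ Ψ (e a) = Ψ 1 * ν a := by
      intro a
      simp only [estS]
      rw [show Finset.Ico (2 ^ 0) (2 ^ (0 + 1)) = {1} from by decide, Finset.sum_singleton,
        pathSum_one, Real.exp_zero, mul_one]
      rfl
    have hsum : (∑ x : Fin (2 ^ (0 + 1) - 1) → Φ,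
        if x (idx 0 1) = i then gtrP 0 π Q τ x * Real.exp (ζ * estS 0 ν τ Ψ x) else 0)
        = ∑ a : Φ, if a = i then π a * Real.exp (ζ * (Ψ 1 * ν a)) else 0 := by
      rw [← Equiv.sum_comp e (fun x : Fin (2 ^ (0 + 1) - 1) → Φ =>
        if x (idx 0 1) = i then gtrP 0 π Q τ x * Real.exp (ζ * estS 0 ν τ Ψ x) else 0)]
      refine Finset.sum_congr rfl fun a _ => ?_
      have hcond : (e a) (idx 0 1) = a := rfl
      show (if (e a) (idx 0 1) = i then gtrP 0 π Q τ (e a)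
        * Real.exp (ζ * estS 0 ν τ Ψ (e a)) else 0) = _
      rw [hcond, hg, hs]
    rw [hsum, Finset.sum_ite_eq' Finset.univ i
      (fun a => π a * Real.exp (ζ * (Ψ 1 * ν a)))]
    simp only [Finset.mem_univ, if_true]
    refine le_of_eq ?_
    rw [show Finset.Ico 2 (2 ^ (0 + 1)) = ∅ from by decide, Finset.sum_empty]
    norm_num
  | succ n ih =>
    intro τ Ψ hτ hΨ i ζ
    have h1a : (1 : ℕ) ≤ 2 ^ (n + 1) := Nat.one_le_two_pow
    have h1n : (1 : ℕ) ≤ 2 ^ n := Nat.one_le_two_pow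
    have hpa : (2 : ℕ) ^ (n + 1 + 1) = 2 ^ (n + 1) + 2 ^ (n + 1) := by
      rw [pow_succ]; ring
    have h3a : (2 : ℕ) ^ (n + 1) = 2 * 2 ^ n := by rw [pow_succ]; ring
    have h2a : (2 : ℕ) ≤ 2 ^ (n + 1) := by omega
    have haa : (2 : ℕ) ^ (n + 1) ≤ 2 ^ (n + 1 + 1) := by omega
    have hτ' : ∀ v, 2 ≤ v → v < 2 ^ (n + 1) → 0 ≤ τ v := fun v hv1 hv2 =>
      hτ v hv1 (by omega)
    have hΨ' : ∀ v, 1 ≤ v → v < 2 ^ n → Ψ v = Ψ (2 * v) + Ψ (2 * v + 1) := fun v hv1 hv2 =>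
      hΨ v hv1 (by omega)
    set G : (Fin (2 ^ (n + 1) - 1) → Φ) → Fin (2 ^ (n + 1)) → Φ → ℝ := fun y j c =>
      matExp (τ (2 ^ (n + 1) + (j : ℕ)) • Q) (y (idx n ((2 ^ (n + 1) + (j : ℕ)) / 2))) c
        * Real.exp (ζ * (Ψ (2 ^ (n + 1) + (j : ℕ)) * ν c
            * Real.exp (pathSum τ 1 (2 ^ (n + 1) + (j : ℕ))))) with hGdef
    -- the set of leaves as an interval
    have hIco : Finset.Ico (2 ^ (n + 1)) (2 ^ (n + 1 + 1))
        = Finset.Ico (2 ^ (n + 1)) (2 ^ (n + 1) + 2 ^ (n + 1)) := by rw [hpa]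
    -- key pointwise identity
    have key : ∀ (y : Fin (2 ^ (n + 1) - 1) → Φ) (z : Fin (2 ^ (n + 1)) → Φ),
        (if (glueEquiv n (y, z)) (idx (n + 1) 1) = i
          then gtrP (n + 1) π Q τ (glueEquiv n (y, z))
            * Real.exp (ζ * estS (n + 1) ν τ Ψ (glueEquiv n (y, z))) else 0)
        = (if y (idx n 1) = i then gtrP n π Q τ y
            * ∏ j : Fin (2 ^ (n + 1)), G y j (z j) else 0) := by
      intro y z
      rw [glue_low n 1 le_rfl (by omega) y z]
      by_cases hc : y (idx n 1) = i
      · rw [if_pos hc, if_pos hc]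
        have hgtr : gtrP (n + 1) π Q τ (glueEquiv n (y, z)) = gtrP n π Q τ y
            * ∏ j : Fin (2 ^ (n + 1)),
                matExp (τ (2 ^ (n + 1) + (j : ℕ)) • Q)
                  (y (idx n ((2 ^ (n + 1) + (j : ℕ)) / 2))) (z j) := by
          simp only [gtrP]
          rw [glue_low n 1 le_rfl (by omega) y z,
            ← Finset.prod_Ico_consecutive _ h2a haa]
          have hP1 : (∏ v ∈ Finset.Ico 2 (2 ^ (n + 1)),
              matExp (τ v • Q) ((glueEquiv n (y, z)) (idx (n + 1) (v / 2)))
                ((glueEquiv n (y, z)) (idx (n + 1) v)))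
              = ∏ v ∈ Finset.Ico 2 (2 ^ (n + 1)),
                  matExp (τ v • Q) (y (idx n (v / 2))) (y (idx n v)) := by
            refine Finset.prod_congr rfl fun v hv => ?_
            rw [Finset.mem_Ico] at hv
            rw [glue_low n (v / 2) (by omega) (by omega) y z,
              glue_low n v (by omega) (by omega) y z]
          have hP2 : (∏ v ∈ Finset.Ico (2 ^ (n + 1)) (2 ^ (n + 1 + 1)),
              matExp (τ v • Q) ((glueEquiv n (y, z)) (idx (n + 1) (v / 2)))
                ((glueEquiv n (y, z)) (idx (n + 1) v)))
              = ∏ j : Fin (2 ^ (n + 1)),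
                  matExp (τ (2 ^ (n + 1) + (j : ℕ)) • Q)
                    (y (idx n ((2 ^ (n + 1) + (j : ℕ)) / 2))) (z j) := by
            rw [hIco, prod_Ico_offset]
            refine Finset.prod_congr rfl fun j _ => ?_
            have hj := j.isLt
            rw [glue_low n ((2 ^ (n + 1) + (j : ℕ)) / 2) (by omega) (by omega) y z,
              glue_high' n j y z]
          rw [hP1, hP2]
          ring
        have hest : Real.exp (ζ * estS (n + 1) ν τ Ψ (glueEquiv n (y, z)))
            = ∏ j : Fin (2 ^ (n + 1)),
                Real.exp (ζ * (Ψ (2 ^ (n + 1) + (j : ℕ)) * ν (z j)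
                  * Real.exp (pathSum τ 1 (2 ^ (n + 1) + (j : ℕ))))) := by
          simp only [estS]
          rw [hIco, sum_Ico_offset (fun ℓ => Ψ ℓ * ν ((glueEquiv n (y, z)) (idx (n + 1) ℓ))
            * Real.exp (pathSum τ 1 ℓ)) (2 ^ (n + 1)) (2 ^ (n + 1))]
          rw [Finset.mul_sum, Real.exp_sum]
          refine Finset.prod_congr rfl fun j _ => ?_
          rw [glue_high' n j y z]
        rw [hgtr, hest, mul_assoc, ← Finset.prod_mul_distrib]
      · rw [if_neg hc, if_neg hc]
    -- per-vertex Hoeffding bound, aggregated over the leaves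
    set D : ℝ := ∑ v ∈ Finset.Ico (2 ^ (n + 1)) (2 ^ (n + 1 + 1)),
      Ψ v ^ 2 * Real.exp (2 * pathSum τ 1 v) with hDdef
    have hstep : ∀ y : Fin (2 ^ (n + 1) - 1) → Φ,
        (∏ j : Fin (2 ^ (n + 1)), ∑ c : Φ, G y j c)
          ≤ Real.exp (2 * C ^ 2 * ζ ^ 2 * D) * Real.exp (ζ * estS n ν τ Ψ y) := by
      intro y
      have hτj : ∀ j : Fin (2 ^ (n + 1)), 0 ≤ τ (2 ^ (n + 1) + (j : ℕ)) := fun j =>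
        hτ _ (by omega) (by have := j.isLt; omega)
      have hb : ∀ j : Fin (2 ^ (n + 1)), (∑ c : Φ, G y j c)
          ≤ Real.exp ((ζ * Ψ (2 ^ (n + 1) + (j : ℕ))
                * Real.exp (pathSum τ 1 (2 ^ (n + 1) + (j : ℕ))))
              * (Real.exp (-(τ (2 ^ (n + 1) + (j : ℕ))))
                * ν (y (idx n ((2 ^ (n + 1) + (j : ℕ)) / 2))))
            + 2 * C ^ 2 * (ζ * Ψ (2 ^ (n + 1) + (j : ℕ))
                * Real.exp (pathSum τ 1 (2 ^ (n + 1) + (j : ℕ)))) ^ 2) := by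
        intro j
        have hh := hoeffding_step Q hQoff hQrow ν hν C hCpos hC
          (τ (2 ^ (n + 1) + (j : ℕ))) (hτj j)
          (ζ * Ψ (2 ^ (n + 1) + (j : ℕ)) * Real.exp (pathSum τ 1 (2 ^ (n + 1) + (j : ℕ))))
          (y (idx n ((2 ^ (n + 1) + (j : ℕ)) / 2)))
        refine le_trans (le_of_eq (Finset.sum_congr rfl fun c _ => ?_)) hh
        rw [hGdef]
        congr 1
        congr 1
        ring
      calc (∏ j : Fin (2 ^ (n + 1)), ∑ c : Φ, G y j c)
          ≤ ∏ j : Fin (2 ^ (n + 1)),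
              Real.exp ((ζ * Ψ (2 ^ (n + 1) + (j : ℕ))
                    * Real.exp (pathSum τ 1 (2 ^ (n + 1) + (j : ℕ))))
                  * (Real.exp (-(τ (2 ^ (n + 1) + (j : ℕ))))
                    * ν (y (idx n ((2 ^ (n + 1) + (j : ℕ)) / 2))))
                + 2 * C ^ 2 * (ζ * Ψ (2 ^ (n + 1) + (j : ℕ))
                    * Real.exp (pathSum τ 1 (2 ^ (n + 1) + (j : ℕ)))) ^ 2) := by
            refine Finset.prod_le_prod (fun j _ => Finset.sum_nonneg fun c _ => ?_)
              (fun j _ => hb j)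
            rw [hGdef]
            exact mul_nonneg (matExp_rate_nonneg Q hQoff _ (hτj j) _ _) (Real.exp_pos _).le
        _ = Real.exp (∑ j : Fin (2 ^ (n + 1)),
              ((ζ * Ψ (2 ^ (n + 1) + (j : ℕ))
                    * Real.exp (pathSum τ 1 (2 ^ (n + 1) + (j : ℕ))))
                  * (Real.exp (-(τ (2 ^ (n + 1) + (j : ℕ))))
                    * ν (y (idx n ((2 ^ (n + 1) + (j : ℕ)) / 2))))
                + 2 * C ^ 2 * (ζ * Ψ (2 ^ (n + 1) + (j : ℕ))
                    * Real.exp (pathSum τ 1 (2 ^ (n + 1) + (j : ℕ)))) ^ 2)) :=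
            (Real.exp_sum _ _).symm
        _ = Real.exp (ζ * estS n ν τ Ψ y + 2 * C ^ 2 * ζ ^ 2 * D) := by
            congr 1
            rw [Finset.sum_add_distrib]
            congr 1
            · -- mean part
              have hper : ∀ j : Fin (2 ^ (n + 1)),
                  (ζ * Ψ (2 ^ (n + 1) + (j : ℕ))
                      * Real.exp (pathSum τ 1 (2 ^ (n + 1) + (j : ℕ))))
                    * (Real.exp (-(τ (2 ^ (n + 1) + (j : ℕ))))
                      * ν (y (idx n ((2 ^ (n + 1) + (j : ℕ)) / 2))))
                  = ζ * (Ψ (2 ^ (n + 1) + (j : ℕ))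
                      * Real.exp (pathSum τ 1 ((2 ^ (n + 1) + (j : ℕ)) / 2))
                      * ν (y (idx n ((2 ^ (n + 1) + (j : ℕ)) / 2)))) := by
                intro j
                have hEE : Real.exp (pathSum τ 1 (2 ^ (n + 1) + (j : ℕ)))
                    * Real.exp (-(τ (2 ^ (n + 1) + (j : ℕ))))
                    = Real.exp (pathSum τ 1 ((2 ^ (n + 1) + (j : ℕ)) / 2)) := by
                  rw [← Real.exp_add, pathSum_step τ _ (by omega)]
                  congr 1
                  ring
                calc (ζ * Ψ (2 ^ (n + 1) + (j : ℕ))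
                      * Real.exp (pathSum τ 1 (2 ^ (n + 1) + (j : ℕ))))
                    * (Real.exp (-(τ (2 ^ (n + 1) + (j : ℕ))))
                      * ν (y (idx n ((2 ^ (n + 1) + (j : ℕ)) / 2))))
                    = ζ * (Ψ (2 ^ (n + 1) + (j : ℕ))
                        * (Real.exp (pathSum τ 1 (2 ^ (n + 1) + (j : ℕ)))
                          * Real.exp (-(τ (2 ^ (n + 1) + (j : ℕ)))))
                        * ν (y (idx n ((2 ^ (n + 1) + (j : ℕ)) / 2)))) := by ring
                  _ = _ := by rw [hEE]
              rw [Finset.sum_congr rfl fun j _ => hper j,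
                ← sum_Ico_offset (fun v => ζ * (Ψ v * Real.exp (pathSum τ 1 (v / 2))
                    * ν (y (idx n (v / 2))))) (2 ^ (n + 1)) (2 ^ (n + 1)),
                show Finset.Ico (2 ^ (n + 1)) (2 ^ (n + 1) + 2 ^ (n + 1))
                    = Finset.Ico (2 * 2 ^ n) (2 * 2 ^ (n + 1)) from by
                  rw [← two_mul, ← h3a],
                sum_Ico_double]
              simp only [estS]
              rw [Finset.mul_sum]
              refine Finset.sum_congr rfl fun u hu => ?_
              rw [Finset.mem_Ico] at hu
              have hdiv1 : 2 * u / 2 = u := by omega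
              have hdiv2 : (2 * u + 1) / 2 = u := by omega
              rw [hdiv1, hdiv2, hΨ u (by omega) hu.2]
              ring
            · -- variance part
              have hper2 : ∀ j : Fin (2 ^ (n + 1)),
                  2 * C ^ 2 * (ζ * Ψ (2 ^ (n + 1) + (j : ℕ))
                      * Real.exp (pathSum τ 1 (2 ^ (n + 1) + (j : ℕ)))) ^ 2
                  = 2 * C ^ 2 * ζ ^ 2 * (Ψ (2 ^ (n + 1) + (j : ℕ)) ^ 2
                      * Real.exp (2 * pathSum τ 1 (2 ^ (n + 1) + (j : ℕ)))) := by
                intro j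
                rw [show (2 : ℝ) * pathSum τ 1 (2 ^ (n + 1) + (j : ℕ))
                    = pathSum τ 1 (2 ^ (n + 1) + (j : ℕ))
                      + pathSum τ 1 (2 ^ (n + 1) + (j : ℕ)) from by ring, Real.exp_add]
                ring
              rw [Finset.sum_congr rfl fun j _ => hper2 j, ← Finset.mul_sum, hDdef, hIco,
                sum_Ico_offset (fun v => Ψ v ^ 2 * Real.exp (2 * pathSum τ 1 v))
                  (2 ^ (n + 1)) (2 ^ (n + 1))]
        _ = Real.exp (2 * C ^ 2 * ζ ^ 2 * D) * Real.exp (ζ * estS n ν τ Ψ y) := by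
            rw [← Real.exp_add]
            congr 1
            ring
    -- assemble
    calc (∑ x : Fin (2 ^ (n + 1 + 1) - 1) → Φ,
          if x (idx (n + 1) 1) = i then gtrP (n + 1) π Q τ x
            * Real.exp (ζ * estS (n + 1) ν τ Ψ x) else 0)
        = ∑ p : (Fin (2 ^ (n + 1) - 1) → Φ) × (Fin (2 ^ (n + 1)) → Φ),
            (fun x : Fin (2 ^ (n + 1 + 1) - 1) → Φ =>
              if x (idx (n + 1) 1) = i then gtrP (n + 1) π Q τ x
                * Real.exp (ζ * estS (n + 1) ν τ Ψ x) else 0) (glueEquiv n p) :=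
          (Equiv.sum_comp (glueEquiv n) _).symm
      _ = ∑ y : Fin (2 ^ (n + 1) - 1) → Φ, ∑ z : Fin (2 ^ (n + 1)) → Φ,
            (if y (idx n 1) = i then gtrP n π Q τ y
              * ∏ j : Fin (2 ^ (n + 1)), G y j (z j) else 0) := by
          rw [Fintype.sum_prod_type]
          exact Finset.sum_congr rfl fun y _ => Finset.sum_congr rfl fun z _ => key y z
      _ = ∑ y : Fin (2 ^ (n + 1) - 1) → Φ,
            (if y (idx n 1) = i then gtrP n π Q τ y
              * ∏ j : Fin (2 ^ (n + 1)), ∑ c : Φ, G y j c else 0) := by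
          refine Finset.sum_congr rfl fun y _ => ?_
          by_cases hc : y (idx n 1) = i
          · rw [if_pos hc]
            rw [show (∑ z : Fin (2 ^ (n + 1)) → Φ,
                (if y (idx n 1) = i then gtrP n π Q τ y
                  * ∏ j : Fin (2 ^ (n + 1)), G y j (z j) else 0))
              = ∑ z : Fin (2 ^ (n + 1)) → Φ, gtrP n π Q τ y
                  * ∏ j : Fin (2 ^ (n + 1)), G y j (z j) from
              Finset.sum_congr rfl fun z _ => if_pos hc]
            rw [← Finset.mul_sum, ← Fintype.prod_sum (fun j c => G y j c)]
          · rw [if_neg hc]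
            rw [show (∑ z : Fin (2 ^ (n + 1)) → Φ,
                (if y (idx n 1) = i then gtrP n π Q τ y
                  * ∏ j : Fin (2 ^ (n + 1)), G y j (z j) else 0))
              = ∑ z : Fin (2 ^ (n + 1)) → Φ, (0 : ℝ) from
              Finset.sum_congr rfl fun z _ => if_neg hc]
            exact Finset.sum_const_zero
      _ ≤ ∑ y : Fin (2 ^ (n + 1) - 1) → Φ,
            (if y (idx n 1) = i then gtrP n π Q τ y
              * (Real.exp (2 * C ^ 2 * ζ ^ 2 * D)
                * Real.exp (ζ * estS n ν τ Ψ y)) else 0) := by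
          refine Finset.sum_le_sum fun y _ => ?_
          by_cases hc : y (idx n 1) = i
          · rw [if_pos hc, if_pos hc]
            exact mul_le_mul_of_nonneg_left (hstep y)
              (gtrP_nonneg n π Q τ hπpos hQoff hτ' y)
          · rw [if_neg hc, if_neg hc]
      _ = Real.exp (2 * C ^ 2 * ζ ^ 2 * D)
            * ∑ y : Fin (2 ^ (n + 1) - 1) → Φ,
              (if y (idx n 1) = i then gtrP n π Q τ y
                * Real.exp (ζ * estS n ν τ Ψ y) else 0) := by
          refine Eq.trans (Finset.sum_congr rfl fun y _ => ?_)
            (Finset.mul_sum Finset.univ (fun y => if y (idx n 1) = i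
              then gtrP n π Q τ y * Real.exp (ζ * estS n ν τ Ψ y) else 0)
              (Real.exp (2 * C ^ 2 * ζ ^ 2 * D))).symm
          by_cases hc : y (idx n 1) = i
          · rw [if_pos hc, if_pos hc]
            ring
          · rw [if_neg hc, if_neg hc, mul_zero]
      _ ≤ Real.exp (2 * C ^ 2 * ζ ^ 2 * D)
            * (π i * Real.exp (ζ * (Ψ 1 * ν i)
              + 2 * C ^ 2 * ζ ^ 2 * ∑ v ∈ Finset.Ico 2 (2 ^ (n + 1)),
                  Ψ v ^ 2 * Real.exp (2 * pathSum τ 1 v))) :=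
          mul_le_mul_of_nonneg_left (ih τ Ψ hτ' hΨ' i ζ) (Real.exp_pos _).le
      _ = π i * Real.exp (ζ * (Ψ 1 * ν i)
          + 2 * C ^ 2 * ζ ^ 2 * ∑ v ∈ Finset.Ico 2 (2 ^ (n + 1 + 1)),
              Ψ v ^ 2 * Real.exp (2 * pathSum τ 1 v)) := by
          have hsplit2 : (∑ v ∈ Finset.Ico 2 (2 ^ (n + 1 + 1)),
              Ψ v ^ 2 * Real.exp (2 * pathSum τ 1 v))
              = (∑ v ∈ Finset.Ico 2 (2 ^ (n + 1)),
                  Ψ v ^ 2 * Real.exp (2 * pathSum τ 1 v)) + D := by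
            rw [hDdef]
            exact (Finset.sum_Ico_consecutive _ h2a haa).symm
          rw [hsplit2, mul_comm (Real.exp (2 * C ^ 2 * ζ ^ 2 * D)), mul_assoc,
            ← Real.exp_add]
          congr 1
          congr 1
          ring

end Claim

/-- (Weighted Majority: Exponential Bound.) For every `f > 0` there is `c > 0`,
depending only on `Q` and `f`, such that for every depth `h ≥ 1`, every edge-weight
assignment with `τ_v ≥ f`, every unit flow `Ψ`, every state `i` and every `ζ ∈ ℝ`:
`E[exp(ζS) | ξ_ρ = i] ≤ exp(ν_i ζ + (1/2) c ζ² K_Ψ)`. -/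
theorem weighted_majority_exponential_bound {Φ : Type*} [Fintype Φ] [DecidableEq Φ]
    (hcard : 2 ≤ Fintype.card Φ)
    (Q : Matrix Φ Φ ℝ) (π ν : Φ → ℝ)
    (hQoff : ∀ i j, i ≠ j → 0 < Q i j)
    (hQrow : ∀ i, ∑ j : Φ, Q i j = 0)
    (hπpos : ∀ i, 0 < π i)
    (hπsum : ∑ i : Φ, π i = 1)
    (hrev : ∀ i j, π i * Q i j = π j * Q j i)
    (hν : Q.mulVec ν = -ν)
    (hnorm : ∑ i : Φ, π i * ν i ^ 2 = 1) :
    ∀ f : ℝ, 0 < f → ∃ c : ℝ, 0 < c ∧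
      ∀ h : ℕ, 1 ≤ h →
      ∀ τ : ℕ → ℝ, (∀ v, 2 ≤ v → v < 2 ^ (h + 1) → f ≤ τ v) →
      ∀ Ψ : ℕ → ℝ, IsUnitFlow h Ψ →
      ∀ i : Φ, ∀ ζ : ℝ,
        (1 / π i) *
            ∑ x : Fin (2 ^ (h + 1) - 1) → Φ,
              (if x (idx h 1) = i then gtrP h π Q τ x * Real.exp (ζ * estS h ν τ Ψ x)
               else 0) ≤
          Real.exp (ν i * ζ + (1 / 2) * c * ζ ^ 2 * Kflow h τ Ψ) := by
  intro f hf
  haveI : Nonempty Φ := Fintype.card_pos_iff.mp (by omega)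
  set C : ℝ := Finset.univ.sup' Finset.univ_nonempty (fun a => |ν a|) with hCdef
  have hC : ∀ a, |ν a| ≤ C := fun a => by
    rw [hCdef]
    exact Finset.le_sup' (fun b => |ν b|) (Finset.mem_univ a)
  have hCpos : 0 < C := by
    by_contra hcon
    push_neg at hcon
    have hzero : ∀ a, ν a = 0 := fun a =>
      abs_eq_zero.mp (le_antisymm ((hC a).trans hcon) (abs_nonneg _))
    have hz : ∑ i : Φ, π i * ν i ^ 2 = 0 :=
      Finset.sum_eq_zero fun a _ => by rw [hzero a]; ring
    rw [hnorm] at hz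
    norm_num at hz
  have hden : 0 < 1 - Real.exp (-(2 * f)) := by
    have h1 : Real.exp (-(2 * f)) < 1 := Real.exp_lt_one_iff.2 (by linarith)
    linarith
  refine ⟨4 * C ^ 2 / (1 - Real.exp (-(2 * f))), by positivity, ?_⟩
  intro h hh τ hτ Ψ hΨ i ζ
  obtain ⟨hΨ1, hΨnn, hΨflow⟩ := hΨ
  have hτ0 : ∀ v, 2 ≤ v → v < 2 ^ (h + 1) → 0 ≤ τ v := fun v h1 h2 =>
    le_trans hf.le (hτ v h1 h2)
  have hQoff' : ∀ i j, i ≠ j → 0 ≤ Q i j := fun i j hij => (hQoff i j hij).le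
  have hmain := claim_bound Q π ν hQoff' hQrow hπpos hν C hCpos hC h τ Ψ hτ0 hΨflow i ζ
  have hπi : 0 < π i := hπpos i
  have hexp_le : Real.exp (ζ * (Ψ 1 * ν i)
        + 2 * C ^ 2 * ζ ^ 2 * ∑ v ∈ Finset.Ico 2 (2 ^ (h + 1)),
            Ψ v ^ 2 * Real.exp (2 * pathSum τ 1 v))
      ≤ Real.exp (ν i * ζ + (1 / 2) * (4 * C ^ 2 / (1 - Real.exp (-(2 * f)))) * ζ ^ 2
          * Kflow h τ Ψ) := by
    rw [Real.exp_le_exp, hΨ1]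
    have hterm : ∀ v ∈ Finset.Ico 2 (2 ^ (h + 1)),
        2 * C ^ 2 * ζ ^ 2 * (Ψ v ^ 2 * Real.exp (2 * pathSum τ 1 v))
          ≤ (1 / 2) * (4 * C ^ 2 / (1 - Real.exp (-(2 * f)))) * ζ ^ 2
            * ((1 - Real.exp (-(2 * τ v))) * Real.exp (2 * pathSum τ 1 v) * Ψ v ^ 2) := by
      intro v hv
      rw [Finset.mem_Ico] at hv
      have hfv := hτ v hv.1 hv.2
      have h1 : 1 - Real.exp (-(2 * f)) ≤ 1 - Real.exp (-(2 * τ v)) := by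
        have := Real.exp_le_exp.2 (show -(2 * τ v) ≤ -(2 * f) by linarith)
        linarith
      have hc' : 2 * C ^ 2
          ≤ 1 / 2 * (4 * C ^ 2 / (1 - Real.exp (-(2 * f)))) * (1 - Real.exp (-(2 * τ v))) := by
        calc 2 * C ^ 2 = 2 * C ^ 2 * 1 := by ring
          _ ≤ 2 * C ^ 2 * ((1 - Real.exp (-(2 * τ v))) / (1 - Real.exp (-(2 * f)))) := by
              refine mul_le_mul_of_nonneg_left ((one_le_div hden).2 h1) (by positivity)
          _ = 1 / 2 * (4 * C ^ 2 / (1 - Real.exp (-(2 * f))))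
              * (1 - Real.exp (-(2 * τ v))) := by
              field_simp
              ring
      calc 2 * C ^ 2 * ζ ^ 2 * (Ψ v ^ 2 * Real.exp (2 * pathSum τ 1 v))
          = (2 * C ^ 2) * (ζ ^ 2 * (Ψ v ^ 2 * Real.exp (2 * pathSum τ 1 v))) := by ring
        _ ≤ (1 / 2 * (4 * C ^ 2 / (1 - Real.exp (-(2 * f)))) * (1 - Real.exp (-(2 * τ v))))
            * (ζ ^ 2 * (Ψ v ^ 2 * Real.exp (2 * pathSum τ 1 v))) :=
            mul_le_mul_of_nonneg_right hc' (by positivity)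
        _ = 1 / 2 * (4 * C ^ 2 / (1 - Real.exp (-(2 * f)))) * ζ ^ 2
            * ((1 - Real.exp (-(2 * τ v))) * Real.exp (2 * pathSum τ 1 v) * Ψ v ^ 2) := by
            ring
    calc ζ * (1 * ν i) + 2 * C ^ 2 * ζ ^ 2 * ∑ v ∈ Finset.Ico 2 (2 ^ (h + 1)),
            Ψ v ^ 2 * Real.exp (2 * pathSum τ 1 v)
        = ν i * ζ + ∑ v ∈ Finset.Ico 2 (2 ^ (h + 1)),
            2 * C ^ 2 * ζ ^ 2 * (Ψ v ^ 2 * Real.exp (2 * pathSum τ 1 v)) := by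
          rw [Finset.mul_sum]
          ring
      _ ≤ ν i * ζ + ∑ v ∈ Finset.Ico 2 (2 ^ (h + 1)),
            (1 / 2) * (4 * C ^ 2 / (1 - Real.exp (-(2 * f)))) * ζ ^ 2
              * ((1 - Real.exp (-(2 * τ v))) * Real.exp (2 * pathSum τ 1 v) * Ψ v ^ 2) :=
          add_le_add_right (Finset.sum_le_sum hterm) _
      _ = ν i * ζ + (1 / 2) * (4 * C ^ 2 / (1 - Real.exp (-(2 * f)))) * ζ ^ 2
            * Kflow h τ Ψ := by
          rw [Kflow, Finset.mul_sum]
  calc (1 / π i) * ∑ x : Fin (2 ^ (h + 1) - 1) → Φ,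
        (if x (idx h 1) = i then gtrP h π Q τ x * Real.exp (ζ * estS h ν τ Ψ x) else 0)
      ≤ (1 / π i) * (π i * Real.exp (ζ * (Ψ 1 * ν i)
          + 2 * C ^ 2 * ζ ^ 2 * ∑ v ∈ Finset.Ico 2 (2 ^ (h + 1)),
              Ψ v ^ 2 * Real.exp (2 * pathSum τ 1 v))) :=
        mul_le_mul_of_nonneg_left hmain (by positivity)
    _ = Real.exp (ζ * (Ψ 1 * ν i)
          + 2 * C ^ 2 * ζ ^ 2 * ∑ v ∈ Finset.Ico 2 (2 ^ (h + 1)),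
              Ψ v ^ 2 * Real.exp (2 * pathSum τ 1 v)) := by
        field_simp
    _ ≤ Real.exp (ν i * ζ + (1 / 2) * (4 * C ^ 2 / (1 - Real.exp (-(2 * f)))) * ζ ^ 2
          * Kflow h τ Ψ) := hexp_le
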